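/- Let p ∈ S^m, t ∈ (0,1], and a₁,…,a_n ∈ S^m with ⟨a_i,p⟩ = t for i ∈ [k+1] and ⟨a_i,p⟩ > t for i ∈ [n]∖[k+1] (1 ≤ k < n). If t·p ∉ cone{a₁,…,a_{k+1}}, then cap(p, arccos t) is not a smallest including cap for (a₁,…,a_n): there exists p_δ ∈ S^m and t_δ > t with ⟨a_i,p_δ⟩ > t_δ for all i ∈ [n]. -/

import Mathlib

open Finset

variable {E : Type*} [NormedAddCommGroup E] [InnerProductSpace ℝ E] [FiniteDimensional ℝ E]

/-- The set of nonnegative combinations of `v`. -/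
def coneSet {N : ℕ} (v : Fin N → E) : Set E :=
  {x | ∃ c : Fin N → ℝ, (∀ i, 0 ≤ c i) ∧ x = ∑ i, c i • v i}

theorem isClosed_coneSet : ∀ (N : ℕ) (v : Fin N → E), IsClosed (coneSet v) := by
  intro N
  induction N with
  | zero =>
    intro v
    have : coneSet v = {0} := by
      ext x
      simp only [coneSet, Set.mem_setOf_eq, Set.mem_singleton_iff]
      constructor
      · rintro ⟨c, -, rfl⟩; simp
      · rintro rfl; exact ⟨0, fun i => le_rfl, by simp⟩
    rw [this]; exact isClosed_singleton
  | succ N ih =>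
    intro v
    by_cases hdep : ∃ c : Fin (N+1) → ℝ, (∀ i, 0 ≤ c i) ∧ (∃ j, c j ≠ 0) ∧
        ∑ i, c i • v i = 0
    · -- positively dependent case: the cone is a finite union of smaller cones
      obtain ⟨c, hc0, ⟨j1, hj1⟩, hcsum⟩ := hdep
      have hsub : ∀ j : Fin (N+1), coneSet (v ∘ j.succAbove) ⊆ coneSet v := by
        rintro j x ⟨d, hd0, rfl⟩
        refine ⟨(j.insertNth (0:ℝ) d : Fin (N+1) → ℝ), ?_, ?_⟩
        · intro i
          rcases eq_or_ne i j with rfl | hne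
          · simp
          · obtain ⟨i', rfl⟩ := Fin.exists_succAbove_eq hne
            simp [hd0 i']
        · rw [Fin.sum_univ_succAbove (fun i => (j.insertNth (0:ℝ) d : Fin (N+1) → ℝ) i • v i) j]
          simp
      have hunion : coneSet v = ⋃ j : Fin (N+1), coneSet (v ∘ j.succAbove) := by
        apply Set.Subset.antisymm
        · rintro x ⟨d, hd0, rfl⟩
          set T : Finset (Fin (N+1)) := Finset.univ.filter (fun j => c j ≠ 0) with hT
          have hTne : T.Nonempty := ⟨j1, by simp [hT, hj1]⟩
          set τ : ℝ := T.inf' hTne (fun j => d j / c j) with hτ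
          obtain ⟨j₀, hj₀T, hj₀⟩ := Finset.exists_mem_eq_inf' hTne (fun j => d j / c j)
          have hcpos : ∀ j ∈ T, 0 < c j := by
            intro j hj
            rcases (hc0 j).lt_or_eq with h | h
            · exact h
            · exact absurd h.symm (by simpa [hT] using hj)
          have hτ0 : 0 ≤ τ := by
            apply Finset.le_inf'
            intro j hj
            exact div_nonneg (hd0 j) (hcpos j hj).le
          have he0 : ∀ i, 0 ≤ d i - τ * c i := by
            intro i
            by_cases hci : c i = 0
            · simp [hci, hd0 i]
            · have hiT : i ∈ T := by simp [hT, hci]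
              have h1 : τ ≤ d i / c i := Finset.inf'_le _ hiT
              have h2 := hcpos i hiT
              rw [le_div_iff₀ h2] at h1
              linarith
          have hej₀ : d j₀ - τ * c j₀ = 0 := by
            have : τ = d j₀ / c j₀ := hj₀
            rw [this, div_mul_cancel₀]
            · ring
            · exact (hcpos j₀ hj₀T).ne'
          have hxe : ∑ i, d i • v i = ∑ i, (d i - τ * c i) • v i := by
            rw [Finset.sum_congr rfl (fun i _ => sub_smul (d i) (τ * c i) (v i))]
            rw [Finset.sum_sub_distrib]
            have : ∑ i, (τ * c i) • v i = τ • ∑ i, c i • v i := by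
              rw [Finset.smul_sum]
              exact Finset.sum_congr rfl fun i _ => (smul_smul τ (c i) (v i)).symm
            rw [this, hcsum, smul_zero, sub_zero]
          refine Set.mem_iUnion.2 ⟨j₀, ⟨fun i => d (j₀.succAbove i) - τ * c (j₀.succAbove i),
            fun i => he0 _, ?_⟩⟩
          rw [hxe, Fin.sum_univ_succAbove (fun i => (d i - τ * c i) • v i) j₀, hej₀]
          simp
        · exact Set.iUnion_subset hsub
      rw [hunion]
      exact isClosed_iUnion_of_finite fun j => ih (v ∘ j.succAbove)
    · -- no positive dependence: the cone over a compact set avoiding 0 is closed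
      push_neg at hdep
      set Δ := stdSimplex ℝ (Fin (N+1)) with hΔ
      set f : (Fin (N+1) → ℝ) → E := fun c => ∑ i, c i • v i with hf
      have hfc : Continuous f := by
        apply continuous_finset_sum
        intro i _
        exact (continuous_apply i).smul continuous_const
      have hΔc : IsCompact Δ := isCompact_stdSimplex _ _
      set K : Set E := f '' Δ with hK
      have hKc : IsCompact K := hΔc.image hfc
      have hKne : K.Nonempty := ⟨f (Pi.single 0 1), Set.mem_image_of_mem f (single_mem_stdSimplex ℝ 0)⟩
      have h0K : (0 : E) ∉ K := by
        rintro ⟨c, ⟨hc0, hc1⟩, hc⟩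
        have : ∃ j, c j ≠ 0 := by
          by_contra h
          push_neg at h
          simp [funext h] at hc1
        exact absurd hc (hdep c hc0 this)
      -- minimum norm on K
      obtain ⟨y₀, hy₀K, hy₀min⟩ := hKc.exists_isMinOn hKne (continuous_norm.continuousOn)
      have hδ : 0 < ‖y₀‖ := by
        rcases norm_pos_iff.2 (fun h => h0K (h ▸ hy₀K)) with h
        exact h
      apply IsSeqClosed.isClosed
      intro u x hu hux
      -- write each u m as r m • y m with y m ∈ K
      have hrep : ∀ μ : ℕ, ∃ r : ℝ, 0 ≤ r ∧ ∃ y ∈ K, u μ = r • y := by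
        intro μ
        obtain ⟨c, hc0, hc⟩ := hu μ
        by_cases hs : ∑ i, c i = 0
        · have hall : ∀ i, c i = 0 := by
            intro i
            exact (Finset.sum_eq_zero_iff_of_nonneg (fun i _ => hc0 i)).1 hs i (mem_univ i)
          obtain ⟨y, hy⟩ := hKne
          exact ⟨0, le_rfl, y, hy, by simp [hc, hall]⟩
        · have hspos : 0 < ∑ i, c i :=
            (Finset.sum_nonneg fun i _ => hc0 i).lt_of_ne (Ne.symm hs)
          refine ⟨∑ i, c i, hspos.le, f ((∑ i, c i)⁻¹ • c), ⟨(∑ i, c i)⁻¹ • c, ⟨?_, ?_⟩, rfl⟩, ?_⟩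
          · intro i
            exact mul_nonneg (inv_nonneg.2 hspos.le) (hc0 i)
          · simp [← Finset.mul_sum, inv_mul_cancel₀ hs]
          · rw [hc, hf]
            simp only [Pi.smul_apply, smul_eq_mul]
            rw [Finset.smul_sum]
            apply Finset.sum_congr rfl
            intro i _
            rw [smul_smul, mul_inv_cancel_left₀ hs]
      choose r hr0 y hyK hury using hrep
      -- bound the norms
      have hbd : BddAbove (Set.range fun μ => ‖u μ‖) :=
        (hux.norm).bddAbove_range
      obtain ⟨M, hM⟩ := hbd
      have hrbd : ∀ μ, r μ ≤ M / ‖y₀‖ := by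
        intro μ
        have h1 : ‖u μ‖ = r μ * ‖y μ‖ := by
          rw [hury μ, norm_smul, Real.norm_eq_abs, abs_of_nonneg (hr0 μ)]
        have h2 : ‖y₀‖ ≤ ‖y μ‖ := hy₀min (hyK μ)
        have h3 : ‖u μ‖ ≤ M := hM ⟨μ, rfl⟩
        rw [le_div_iff₀ hδ]
        calc r μ * ‖y₀‖ ≤ r μ * ‖y μ‖ := by
              exact mul_le_mul_of_nonneg_left h2 (hr0 μ)
          _ = ‖u μ‖ := h1.symm
          _ ≤ M := h3
      set C : Set (ℝ × E) := Set.Icc 0 (M / ‖y₀‖) ×ˢ K with hC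
      have hCc : IsCompact C := (isCompact_Icc).prod hKc
      have hmem : ∀ μ, (r μ, y μ) ∈ C := fun μ => ⟨⟨hr0 μ, hrbd μ⟩, hyK μ⟩
      obtain ⟨⟨r₀, z₀⟩, ⟨⟨hr₀0, -⟩, hz₀K⟩, φ, hφ, hφtend⟩ :=
        hCc.tendsto_subseq hmem
      have h1 : Filter.Tendsto (fun μ => r (φ μ) • y (φ μ)) Filter.atTop (nhds (r₀ • z₀)) := by
        have ha : Filter.Tendsto (fun μ => r (φ μ)) Filter.atTop (nhds r₀) :=
          (continuous_fst.tendsto _).comp hφtend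
        have hb : Filter.Tendsto (fun μ => y (φ μ)) Filter.atTop (nhds z₀) :=
          (continuous_snd.tendsto _).comp hφtend
        exact ha.smul hb
      have h2 : Filter.Tendsto (fun μ => u (φ μ)) Filter.atTop (nhds x) :=
        hux.comp hφ.tendsto_atTop
      have h3 : x = r₀ • z₀ := by
        apply tendsto_nhds_unique h2
        convert h1 using 2 with μ
        exact hury (φ μ)
      obtain ⟨c, ⟨hc0, -⟩, hcz⟩ := hz₀K
      exact ⟨fun i => r₀ * c i, fun i => mul_nonneg hr₀0 (hc0 i), by
        have hcz' : f c = z₀ := hcz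
        rw [h3, ← hcz', hf, Finset.smul_sum]
        exact Finset.sum_congr rfl fun i _ => (smul_smul r₀ (c i) (v i))⟩
set_option maxHeartbeats 1000000 in
theorem not_sic_of_not_in_cone (m n k : ℕ) (hk1 : 1 ≤ k) (hkn : k < n)
    (p : EuclideanSpace ℝ (Fin (m + 1))) (hp : ‖p‖ = 1)
    (t : ℝ) (ht : t ∈ Set.Ioc (0 : ℝ) 1)
    (a : Fin n → EuclideanSpace ℝ (Fin (m + 1))) (ha : ∀ i, ‖a i‖ = 1)
    (heq : ∀ i : Fin n, (i : ℕ) < k + 1 → inner ℝ (a i) p = t)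
    (hgt : ∀ i : Fin n, k + 1 ≤ (i : ℕ) → t < (inner ℝ (a i) p : ℝ))
    (hcone : ¬ ∃ c : Fin n → ℝ, (∀ i, 0 ≤ c i) ∧ (∀ i : Fin n, k + 1 ≤ (i : ℕ) → c i = 0) ∧
      t • p = ∑ i, c i • a i) :
    ∃ (q : EuclideanSpace ℝ (Fin (m + 1))) (t' : ℝ), ‖q‖ = 1 ∧ t < t' ∧
      ∀ i, t' < (inner ℝ (a i) q : ℝ) := by
  obtain ⟨ht0, ht1⟩ := ht
  have hkn' : k + 1 ≤ n := hkn
  set b : Fin (k+1) → EuclideanSpace ℝ (Fin (m + 1)) := fun i => a (Fin.castLE hkn' i) with hb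
  -- the convex cone generated by b
  set K : ConvexCone ℝ (EuclideanSpace ℝ (Fin (m + 1))) :=
    { carrier := coneSet b
      smul_mem' := by
        rintro r hr x ⟨c, hc0, rfl⟩
        refine ⟨fun i => r * c i, fun i => mul_nonneg hr.le (hc0 i), ?_⟩
        rw [Finset.smul_sum]
        exact Finset.sum_congr rfl fun i _ => by simp [smul_smul]
      add_mem' := by
        rintro x ⟨c, hc0, rfl⟩ y ⟨d, hd0, rfl⟩
        refine ⟨fun i => c i + d i, fun i => add_nonneg (hc0 i) (hd0 i), ?_⟩
        rw [← Finset.sum_add_distrib]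
        exact Finset.sum_congr rfl fun i _ => by simp [add_smul] } with hK
  have hKne : ((K : Set (EuclideanSpace ℝ (Fin (m + 1))))).Nonempty := ⟨0, 0, fun i => le_rfl, by simp⟩
  have hKcl : IsClosed (K : Set (EuclideanSpace ℝ (Fin (m + 1)))) := isClosed_coneSet (k+1) b
  have hbK : ∀ j : Fin (k+1), b j ∈ K := by
    intro j
    refine ⟨fun i => if i = j then (1:ℝ) else 0, fun i => by positivity, ?_⟩
    rw [Finset.sum_congr rfl (g := fun i => if i = j then b j else 0)
      (fun i _ => by by_cases h : i = j <;> simp [h])]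
    simp
  have hnm : t • p ∉ K := by
    intro ⟨c, hc0, hcs⟩
    apply hcone
    refine ⟨fun i => if h : (i : ℕ) < k + 1 then c ⟨i, h⟩ else 0, ?_, ?_, ?_⟩
    · intro i
      by_cases h : (i : ℕ) < k + 1 <;> simp [h, hc0]
    · intro i hi
      dsimp only
      rw [dif_neg (not_lt.2 hi)]
    · dsimp only
      rw [hcs]
      have hvan : ∀ i ∈ Finset.univ, i ∉ Finset.univ.map (Fin.castLEEmb hkn') →
          (if h : (i : Fin n).1 < k + 1 then c ⟨(i : ℕ), h⟩ else 0) • a i = 0 := by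
        intro i _ hi
        have hlt : ¬ ((i : ℕ) < k + 1) := by
          intro h
          apply hi
          simp only [Finset.mem_map, Finset.mem_univ, true_and]
          exact ⟨⟨(i : ℕ), h⟩, by ext; simp⟩
        rw [dif_neg hlt, zero_smul]
      rw [← Finset.sum_subset (Finset.subset_univ
        (Finset.univ.map (Fin.castLEEmb hkn'))) hvan, Finset.sum_map]
      apply Finset.sum_congr rfl
      intro j _
      have hj : ((Fin.castLEEmb hkn' j : Fin n) : ℕ) < k + 1 := by
        simpa using j.isLt
      rw [dif_pos hj]
      have h2 : (⟨((Fin.castLEEmb hkn' j : Fin n) : ℕ), hj⟩ : Fin (k+1)) = j :=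
        Fin.ext (by simp)
      rw [h2, hb]
      simp [Fin.castLEEmb]
  obtain ⟨y, hy1, hy2⟩ : ∃ y, (∀ x ∈ K, 0 ≤ inner ℝ x y) ∧ inner ℝ y (t • p) < 0 := by
    have hpt : K.Pointed := ⟨0, fun i => le_rfl, by simp⟩
    obtain ⟨y, hy1, hy2⟩ := ProperCone.hyperplane_separation'
      (⟨K.toPointedCone hpt, hKcl⟩ : ProperCone ℝ (EuclideanSpace ℝ (Fin (m + 1)))) (x₀ := t • p) hnm
    exact ⟨y, fun x hx => hy1 x hx, by rw [real_inner_comm]; exact hy2⟩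
  have hpy : (inner ℝ p y : ℝ) < 0 := by
    rw [real_inner_smul_right] at hy2
    have := (real_inner_comm y p) ▸ (by nlinarith : (inner ℝ y p : ℝ) < 0)
    linarith [this]
  have hay : ∀ i : Fin n, (i : ℕ) < k + 1 → (0:ℝ) ≤ inner ℝ (a i) y := by
    intro i hi
    have : a i = b ⟨(i : ℕ), hi⟩ := congrArg a (Fin.ext rfl)
    rw [this]
    exact hy1 _ (hbK _)
  have hy0 : y ≠ 0 := by
    intro h
    rw [h, inner_zero_right] at hpy
    exact absurd hpy (lt_irrefl 0)
  have hynorm : (0:ℝ) < ‖y‖ := norm_pos_iff.2 hy0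
  -- choose ε
  set T : Finset (Fin n) := Finset.univ.filter (fun i => k + 1 ≤ (i : ℕ)) with hT
  set ε : ℝ := if hTne : T.Nonempty then T.inf' hTne (fun i => (inner ℝ (a i) p : ℝ) - t)
    else 1 with hε
  have hε0 : 0 < ε := by
    rw [hε]
    split
    · next hTne =>
      rw [Finset.lt_inf'_iff]
      intro i hi
      have : k + 1 ≤ (i : ℕ) := by simpa [hT] using hi
      linarith [hgt i this]
    · exact one_pos
  have hεle : ∀ i : Fin n, k + 1 ≤ (i : ℕ) → ε ≤ (inner ℝ (a i) p : ℝ) - t := by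
    intro i hi
    have hiT : i ∈ T := by simp [hT, hi]; omega
    rw [hε, dif_pos ⟨i, hiT⟩]
    exact Finset.inf'_le _ hiT
  -- choose δ
  set δ : ℝ := min (-(inner ℝ p y : ℝ) / ‖y‖^2) (ε / (2 * ‖y‖)) with hδdef
  have hδ0 : 0 < δ := by
    apply lt_min
    · exact div_pos (by linarith) (by positivity)
    · positivity
  have hδ1 : δ * ‖y‖^2 ≤ -(inner ℝ p y : ℝ) := by
    have := min_le_left (-(inner ℝ p y : ℝ) / ‖y‖^2) (ε / (2 * ‖y‖))
    rw [← hδdef] at this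
    calc δ * ‖y‖^2 ≤ (-(inner ℝ p y : ℝ) / ‖y‖^2) * ‖y‖^2 := by
          apply mul_le_mul_of_nonneg_right this (by positivity)
      _ = -(inner ℝ p y : ℝ) := by field_simp
  have hδ2 : δ * ‖y‖ ≤ ε / 2 := by
    have := min_le_right (-(inner ℝ p y : ℝ) / ‖y‖^2) (ε / (2 * ‖y‖))
    rw [← hδdef] at this
    calc δ * ‖y‖ ≤ (ε / (2 * ‖y‖)) * ‖y‖ := mul_le_mul_of_nonneg_right this hynorm.le
      _ = ε / 2 := by field_simp
  set w : EuclideanSpace ℝ (Fin (m + 1)) := p + δ • y with hw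
  have hwi : ∀ i : Fin n, (inner ℝ (a i) w : ℝ) = inner ℝ (a i) p + δ * inner ℝ (a i) y := by
    intro i
    rw [hw, inner_add_right, real_inner_smul_right]
  have hw1 : ∀ i : Fin n, t ≤ (inner ℝ (a i) w : ℝ) := by
    intro i
    rw [hwi i]
    by_cases hi : (i : ℕ) < k + 1
    · rw [heq i hi]
      nlinarith [hay i hi, hδ0]
    · push_neg at hi
      have h1 := hεle i hi
      have h2 : |(inner ℝ (a i) y : ℝ)| ≤ ‖a i‖ * ‖y‖ := abs_real_inner_le_norm _ _
      rw [ha i, one_mul] at h2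
      have h3 : -(‖y‖) ≤ (inner ℝ (a i) y : ℝ) := by
        rw [abs_le] at h2; linarith [h2.1]
      nlinarith [hδ0, hδ2]
  have hwnormsq : ‖w‖^2 < 1 := by
    have hexp : ‖w‖^2 = ‖p‖^2 + 2 * (δ * (inner ℝ p y : ℝ)) + δ^2 * ‖y‖^2 := by
      rw [hw, norm_add_sq_real, real_inner_smul_right, norm_smul,
        Real.norm_eq_abs, abs_of_nonneg hδ0.le, mul_pow]
    rw [hexp, hp]
    nlinarith [hδ0, hδ1, hpy, mul_le_mul_of_nonneg_left hδ1 hδ0.le]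
  have hwnorm1 : ‖w‖ < 1 := by nlinarith [norm_nonneg w]
  have hwpos : (0:ℝ) < ‖w‖ := by
    have i0 : Fin n := ⟨0, by omega⟩
    have h1 : t ≤ (inner ℝ (a i0) w : ℝ) := hw1 i0
    have h2 : (inner ℝ (a i0) w : ℝ) ≤ ‖a i0‖ * ‖w‖ := real_inner_le_norm _ _
    rw [ha i0, one_mul] at h2
    nlinarith
  refine ⟨‖w‖⁻¹ • w, (t + t / ‖w‖) / 2, ?_, ?_, ?_⟩
  · rw [norm_smul, Real.norm_eq_abs, abs_of_nonneg (by positivity), inv_mul_cancel₀ hwpos.ne']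
  · have : t < t / ‖w‖ := by
      rw [lt_div_iff₀ hwpos]
      nlinarith
    linarith
  · intro i
    rw [real_inner_smul_right]
    have h1 : t / ‖w‖ ≤ ‖w‖⁻¹ * (inner ℝ (a i) w : ℝ) := by
      rw [div_eq_inv_mul]
      exact mul_le_mul_of_nonneg_left (hw1 i) (by positivity)
    have h2 : t < t / ‖w‖ := by
      rw [lt_div_iff₀ hwpos]
      nlinarith
    linarith
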